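/- arXiv:1210.1432 — 2 statements merged into one kernel-verified Lean document; each statement's English description precedes it below -/
import Mathlib

section
/- With σ as defined implicitly by ∫₀^θ sinᵏ t cosˡ t dt = c₁ ∫₀^{σ(θ)} sin^{k+l} s ds, the inequality σ'(θ) ≥ 1 holds for all θ ∈ (0, π/2); equivalently, sinᵏ θ cosˡ θ ≥ c₁ sin^{k+l} σ(θ) for all θ ∈ (0, π/2). -/
open Real Set Filter Topology

lemma stmt5_cont_sin_rpow (p : ℝ) (hp : 0 ≤ p) : Continuous fun x : ℝ => Real.sin x ^ p := by
  rw [continuous_iff_continuousAt]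
  intro x
  exact (Real.continuousAt_rpow_const _ _ (Or.inr hp)).comp Real.continuous_sin.continuousAt

lemma stmt5_cont_cos_rpow (p : ℝ) (hp : 0 ≤ p) : Continuous fun x : ℝ => Real.cos x ^ p := by
  rw [continuous_iff_continuousAt]
  intro x
  exact (Real.continuousAt_rpow_const _ _ (Or.inr hp)).comp Real.continuous_cos.continuousAt

lemma stmt5_key_alg (k l s c S C P Q : ℝ) (hk : 0 < k) (hl : 0 < l) (hs : 0 < s) (hc : 0 < c)
    (hS : 0 < S) (hsc : s^2 + c^2 = 1) (hSC : S^2 + C^2 = 1) (hP : 0 < P) (hPQ : P < Q)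
    (hw : k*c/s - l*s/c = (k+l)*C/S) :
    -(k/s^2) - l/c^2 + (k+l)/S^2 * (P/Q) < 0 := by
  have hQ : 0 < Q := hP.trans hPQ
  have h1 : (k+l)/S^2 * (P/Q) < (k+l)/S^2 := by
    have : P/Q < 1 := (div_lt_one hQ).2 hPQ
    nlinarith [div_pos (by positivity : (0:ℝ) < k + l) (by positivity : (0:ℝ) < S^2)]
  have h2 : (k+l)/S^2 ≤ k/s^2 + l/c^2 := by
    have hw' : (k*c^2 - l*s^2) * S = (k+l)*C*(s*c) := by
      field_simp at hw
      linarith [hw]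
    have hq : ((k*c^2 - l*s^2) * S)^2 = ((k+l)*C*(s*c))^2 := by rw [hw']
    have h3 : (k+l)^2*s^2*c^2 = ((k*c^2-l*s^2)^2 + (k+l)^2*s^2*c^2) * S^2 := by
      linear_combination (-(k+l)^2*s^2*c^2) * hSC - hq
    have h4 : (k+l)*(k*c^2+l*s^2) = (k*c^2-l*s^2)^2 + k*l + (k+l)^2*s^2*c^2 := by
      linear_combination (k*l - k^2*c^2 - l^2*s^2) * hsc
    rw [div_le_iff₀ (by positivity)]
    have e1 : (s:ℝ)^2 > 0 := by positivity
    have e2 : (c:ℝ)^2 > 0 := by positivity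
    rw [div_add_div _ _ (ne_of_gt e1) (ne_of_gt e2), div_mul_eq_mul_div,
      le_div_iff₀ (by positivity)]
    have key : (k+l)*((k+l)*(s^2*c^2)) ≤ (k+l)*((k*c^2 + s^2*l)*S^2) := by
      nlinarith [h3, h4, mul_pos (mul_pos hk hl) (pow_pos hS 2)]
    exact le_of_mul_le_mul_left key (by positivity)
  linarith

theorem stmt_5 (k l : ℝ) (hk : 0 < k) (hl : 0 < l)
    (c₁ : ℝ)
    (hc₁ : c₁ = (∫ t in (0:ℝ)..(π / 2), Real.sin t ^ k * Real.cos t ^ l) /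
        (∫ s in (0:ℝ)..π, Real.sin s ^ (k + l)))
    (σ : ℝ → ℝ)
    (hσmem : ∀ θ ∈ Icc 0 (π / 2), σ θ ∈ Icc 0 π)
    (hσ0 : σ 0 = 0) (hσπ : σ (π / 2) = π)
    (hσeq : ∀ θ ∈ Icc 0 (π / 2),
      (∫ t in (0:ℝ)..θ, Real.sin t ^ k * Real.cos t ^ l) =
        c₁ * ∫ s in (0:ℝ)..(σ θ), Real.sin s ^ (k + l)) :
    ∀ θ ∈ Ioo 0 (π / 2), 1 ≤ deriv σ θ ∧
      c₁ * Real.sin (σ θ) ^ (k + l) ≤ Real.sin θ ^ k * Real.cos θ ^ l := by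
  have hπ : 0 < π := pi_pos
  have hgc : Continuous fun x : ℝ => Real.sin x ^ k * Real.cos x ^ l :=
    (stmt5_cont_sin_rpow k hk.le).mul (stmt5_cont_cos_rpow l hl.le)
  have hfc : Continuous fun x : ℝ => Real.sin x ^ (k+l) := stmt5_cont_sin_rpow _ (by positivity)
  set F : ℝ → ℝ := fun y => ∫ t in (0:ℝ)..y, Real.sin t ^ k * Real.cos t ^ l with hFdef
  set G : ℝ → ℝ := fun y => ∫ s in (0:ℝ)..y, Real.sin s ^ (k+l) with hGdef
  have hFσ : ∀ θ ∈ Icc 0 (π/2), F θ = c₁ * G (σ θ) := hσeq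
  -- FTC
  have hF : ∀ x : ℝ, HasStrictDerivAt F (Real.sin x ^ k * Real.cos x ^ l) x := fun x =>
    intervalIntegral.integral_hasStrictDerivAt_right
      (hgc.intervalIntegrable _ _) (hgc.stronglyMeasurableAtFilter _ _) hgc.continuousAt
  have hG : ∀ x : ℝ, HasStrictDerivAt G (Real.sin x ^ (k+l)) x := fun x =>
    intervalIntegral.integral_hasStrictDerivAt_right
      (hfc.intervalIntegrable _ _) (hfc.stronglyMeasurableAtFilter _ _) hfc.continuousAt
  -- positivity of integrands
  have hgpos : ∀ x ∈ Ioo 0 (π/2), 0 < Real.sin x ^ k * Real.cos x ^ l := by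
    intro x hx
    have h1 : 0 < Real.sin x := Real.sin_pos_of_pos_of_lt_pi hx.1 (hx.2.trans (by linarith))
    have h2 : 0 < Real.cos x := Real.cos_pos_of_mem_Ioo ⟨by linarith [hx.1], hx.2⟩
    positivity
  have hfpos : ∀ x ∈ Ioo 0 π, 0 < Real.sin x ^ (k+l) := by
    intro x hx
    have h1 : 0 < Real.sin x := Real.sin_pos_of_pos_of_lt_pi hx.1 hx.2
    positivity
  -- strict monotonicity
  have hFmono : StrictMonoOn F (Icc 0 (π/2)) := by
    intro a ha b hb hab
    have key : 0 < ∫ t in a..b, Real.sin t ^ k * Real.cos t ^ l := by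
      refine intervalIntegral.intervalIntegral_pos_of_pos_on (hgc.intervalIntegrable a b) ?_ hab
      intro x hx
      exact hgpos x ⟨lt_of_le_of_lt ha.1 hx.1, lt_of_lt_of_le hx.2 hb.2⟩
    have h5 : F a + (∫ t in a..b, Real.sin t ^ k * Real.cos t ^ l) = F b :=
      intervalIntegral.integral_add_adjacent_intervals (μ := MeasureTheory.volume)
        (hgc.intervalIntegrable 0 a) (hgc.intervalIntegrable a b)
    linarith [key, h5]
  have hGmono : StrictMonoOn G (Icc 0 π) := by
    intro a ha b hb hab
    have key : 0 < ∫ s in a..b, Real.sin s ^ (k+l) := by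
      refine intervalIntegral.intervalIntegral_pos_of_pos_on (hfc.intervalIntegrable a b) ?_ hab
      intro x hx
      exact hfpos x ⟨lt_of_le_of_lt ha.1 hx.1, lt_of_lt_of_le hx.2 hb.2⟩
    have h5 : G a + (∫ s in a..b, Real.sin s ^ (k+l)) = G b :=
      intervalIntegral.integral_add_adjacent_intervals (μ := MeasureTheory.volume)
        (hfc.intervalIntegrable 0 a) (hfc.intervalIntegrable a b)
    linarith [key, h5]
  have hF0 : F 0 = 0 := intervalIntegral.integral_same
  have hG0 : G 0 = 0 := intervalIntegral.integral_same
  have hFhalf : 0 < F (π/2) := by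
    have := hFmono (left_mem_Icc.2 (by linarith)) (right_mem_Icc.2 (by linarith)) (by linarith)
    rwa [hF0] at this
  have hGπ : 0 < G π := by
    have := hGmono (left_mem_Icc.2 hπ.le) (right_mem_Icc.2 hπ.le) hπ
    rwa [hG0] at this
  have hc₁pos : 0 < c₁ := by rw [hc₁]; exact div_pos hFhalf hGπ
  -- σ θ interior
  have hσIoo : ∀ θ ∈ Ioo 0 (π/2), σ θ ∈ Ioo 0 π := by
    intro θ hθ
    have hθI : θ ∈ Icc 0 (π/2) := Ioo_subset_Icc_self hθ
    have hmem := hσmem θ hθI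
    have hFθ1 : 0 < F θ := by
      have := hFmono (left_mem_Icc.2 (by linarith)) hθI hθ.1
      rwa [hF0] at this
    have hFθ2 : F θ < F (π/2) := hFmono hθI (right_mem_Icc.2 (by linarith)) hθ.2
    have heq := hFσ θ hθI
    have heq2 := hFσ (π/2) (right_mem_Icc.2 (by linarith))
    rw [hσπ] at heq2
    constructor
    · rcases eq_or_lt_of_le hmem.1 with h|h
      · exfalso
        rw [← h, hG0, mul_zero] at heq
        linarith [hFθ1]
      · exact h
    · rcases eq_or_lt_of_le hmem.2 with h|h
      · exfalso
        rw [h] at heq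
        rw [heq, ← heq2] at hFθ2
        exact lt_irrefl _ hFθ2
      · exact h
  -- continuity of σ on Icc
  have hFc : Continuous F := by
    rw [continuous_iff_continuousAt]; exact fun x => (hF x).hasDerivAt.continuousAt
  have hσcont : ContinuousOn σ (Icc 0 (π/2)) := by
    intro θ₀ hθ₀
    have hσθ₀ := hσmem θ₀ hθ₀
    rw [ContinuousWithinAt, tendsto_order]
    constructor
    · intro a ha
      rcases lt_or_ge a 0 with h|h
      · filter_upwards [self_mem_nhdsWithin] with y hy
        exact lt_of_lt_of_le h (hσmem y hy).1
      · have haI : a ∈ Icc (0:ℝ) π := ⟨h, le_trans ha.le hσθ₀.2⟩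
        have hGa : G a < G (σ θ₀) := hGmono haI hσθ₀ ha
        have h1 : c₁ * G a < F θ₀ := by
          rw [hFσ θ₀ hθ₀]
          exact (mul_lt_mul_iff_right₀ hc₁pos).2 hGa
        have h2 : ∀ᶠ y in 𝓝[Icc 0 (π/2)] θ₀, c₁ * G a < F y :=
          (hFc.continuousAt.continuousWithinAt).eventually_const_lt h1
        filter_upwards [h2, self_mem_nhdsWithin] with y hy1 hy2
        by_contra hcon
        push_neg at hcon
        have h3 : G (σ y) ≤ G a := hGmono.monotoneOn (hσmem y hy2) haI hcon
        have h4 : c₁ * G (σ y) ≤ c₁ * G a := (mul_le_mul_iff_right₀ hc₁pos).2 h3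
        rw [← hFσ y hy2] at h4
        linarith
    · intro b hb
      rcases le_or_gt b π with h|h
      · have hbI : b ∈ Icc (0:ℝ) π := ⟨le_trans hσθ₀.1 hb.le, h⟩
        have hGb : G (σ θ₀) < G b := hGmono hσθ₀ hbI hb
        have h1 : F θ₀ < c₁ * G b := by
          rw [hFσ θ₀ hθ₀]
          exact (mul_lt_mul_iff_right₀ hc₁pos).2 hGb
        have h2 : ∀ᶠ y in 𝓝[Icc 0 (π/2)] θ₀, F y < c₁ * G b :=
          (hFc.continuousAt.continuousWithinAt).eventually_lt_const h1
        filter_upwards [h2, self_mem_nhdsWithin] with y hy1 hy2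
        by_contra hcon
        push_neg at hcon
        have h3 : G b ≤ G (σ y) := hGmono.monotoneOn hbI (hσmem y hy2) hcon
        have h4 : c₁ * G b ≤ c₁ * G (σ y) := (mul_le_mul_iff_right₀ hc₁pos).2 h3
        rw [← hFσ y hy2] at h4
        linarith
      · filter_upwards [self_mem_nhdsWithin] with y hy
        exact lt_of_le_of_lt (hσmem y hy).2 h
  -- derivative of σ
  have hσD : ∀ θ ∈ Ioo 0 (π/2), HasDerivAt σ
      ((Real.sin θ ^ k * Real.cos θ ^ l) / (c₁ * Real.sin (σ θ) ^ (k+l))) θ := by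
    intro θ hθ
    have hθI : θ ∈ Icc 0 (π/2) := Ioo_subset_Icc_self hθ
    have hs := hσIoo θ hθ
    have hsin : 0 < Real.sin (σ θ) := Real.sin_pos_of_pos_of_lt_pi hs.1 hs.2
    have hfs : 0 < Real.sin (σ θ) ^ (k+l) := Real.rpow_pos_of_pos hsin _
    have hd : c₁ * Real.sin (σ θ) ^ (k+l) ≠ 0 := ne_of_gt (mul_pos hc₁pos hfs)
    have hH : HasStrictDerivAt (fun x => c₁ * G x) (c₁ * Real.sin (σ θ) ^ (k+l)) (σ θ) :=
      (hG (σ θ)).const_mul c₁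
    set Φ : ℝ → ℝ := hH.localInverse _ _ _ hd with hΦdef
    have hΦd : HasStrictDerivAt Φ (c₁ * Real.sin (σ θ) ^ (k+l))⁻¹ (c₁ * G (σ θ)) :=
      hH.to_localInverse hd
    have hlinv : ∀ᶠ x in 𝓝 (σ θ), Φ (c₁ * G x) = x :=
      (hH.hasStrictFDerivAt_equiv hd).eventually_left_inverse
    have hσca : ContinuousAt σ θ :=
      (hσcont θ hθI).continuousAt (Icc_mem_nhds hθ.1 hθ.2)
    have hev1 : ∀ᶠ y in 𝓝 θ, Φ (c₁ * G (σ y)) = σ y := hσca.eventually hlinv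
    have hev2 : ∀ᶠ y in 𝓝 θ, y ∈ Icc 0 (π/2) :=
      eventually_of_mem (Icc_mem_nhds (by linarith [hθ.1] : (0:ℝ) < θ)
        (by linarith [hθ.2])) (fun _ h => h)
    have hev : σ =ᶠ[𝓝 θ] fun y => Φ (F y) := by
      filter_upwards [hev1, hev2] with y h1 h2
      rw [← hFσ y h2] at h1
      exact h1.symm
    have hΦF : HasDerivAt (fun y => Φ (F y))
        ((c₁ * Real.sin (σ θ) ^ (k+l))⁻¹ * (Real.sin θ ^ k * Real.cos θ ^ l)) θ := by
      have h1 : HasDerivAt Φ (c₁ * Real.sin (σ θ) ^ (k+l))⁻¹ (F θ) := by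
        rw [hFσ θ hθI]; exact hΦd.hasDerivAt
      exact h1.comp θ (hF θ).hasDerivAt
    have := hΦF.congr_of_eventuallyEq hev
    rwa [div_eq_inv_mul]
  -- derivative of g
  have hgD : ∀ θ ∈ Ioo 0 (π/2), HasDerivAt (fun y => Real.sin y ^ k * Real.cos y ^ l)
      ((k * (Real.cos θ / Real.sin θ) - l * (Real.sin θ / Real.cos θ)) *
        (Real.sin θ ^ k * Real.cos θ ^ l)) θ := by
    intro θ hθ
    have hsθ : 0 < Real.sin θ := Real.sin_pos_of_pos_of_lt_pi hθ.1 (hθ.2.trans (by linarith))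
    have hcθ : 0 < Real.cos θ := Real.cos_pos_of_mem_Ioo ⟨by linarith [hθ.1], hθ.2⟩
    have h1 : HasDerivAt (fun y => Real.sin y ^ k) (k * Real.sin θ ^ (k-1) * Real.cos θ) θ := by
      have := (Real.hasDerivAt_rpow_const (x := Real.sin θ) (p := k)
        (Or.inl hsθ.ne')).comp θ (Real.hasDerivAt_sin θ)
      exact this
    have h2 : HasDerivAt (fun y => Real.cos y ^ l)
        (l * Real.cos θ ^ (l-1) * (-Real.sin θ)) θ := by
      have := (Real.hasDerivAt_rpow_const (x := Real.cos θ) (p := l)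
        (Or.inl hcθ.ne')).comp θ (Real.hasDerivAt_cos θ)
      exact this
    have hmul := h1.mul h2
    convert hmul using 1
    · rfl
    · rfl
    · rfl
    rw [Real.rpow_sub hsθ, Real.rpow_sub hcθ, Real.rpow_one, Real.rpow_one]
    field_simp
    ring
  -- derivative of Q = c₁ * f ∘ σ
  have hQD : ∀ θ ∈ Ioo 0 (π/2), HasDerivAt (fun y => c₁ * Real.sin (σ y) ^ (k+l))
      ((k+l) * (Real.cos (σ θ) / Real.sin (σ θ)) * (Real.sin θ ^ k * Real.cos θ ^ l)) θ := by
    intro θ hθ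
    have hs := hσIoo θ hθ
    have hsin : 0 < Real.sin (σ θ) := Real.sin_pos_of_pos_of_lt_pi hs.1 hs.2
    have hfs : 0 < Real.sin (σ θ) ^ (k+l) := Real.rpow_pos_of_pos hsin _
    have hf1 : HasDerivAt (fun x => Real.sin x ^ (k+l))
        ((k+l) * Real.sin (σ θ) ^ (k+l-1) * Real.cos (σ θ)) (σ θ) := by
      have := (Real.hasDerivAt_rpow_const (x := Real.sin (σ θ)) (p := k+l)
        (Or.inl hsin.ne')).comp (σ θ) (Real.hasDerivAt_sin (σ θ))
      exact this
    have hcomp := ((hf1.comp θ (hσD θ hθ)).const_mul c₁)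
    convert hcomp using 1
    · rfl
    · rfl
    · rfl
    rw [Real.rpow_sub hsin, Real.rpow_one]
    field_simp
  -- derivative of h
  have hhD : ∀ θ ∈ Ioo 0 (π/2),
      HasDerivAt (fun y => Real.sin y ^ k * Real.cos y ^ l - c₁ * Real.sin (σ y) ^ (k+l))
      ((Real.sin θ ^ k * Real.cos θ ^ l) *
        ((k * (Real.cos θ / Real.sin θ) - l * (Real.sin θ / Real.cos θ))
          - (k+l) * (Real.cos (σ θ) / Real.sin (σ θ)))) θ := by
    intro θ hθ
    have := (hgD θ hθ).sub (hQD θ hθ)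
    convert this using 1
    · rfl
    · rfl
    · rfl
    ring
  -- the fundamental pointwise inequality
  have hmain : ∀ θ ∈ Icc 0 (π/2),
      0 ≤ Real.sin θ ^ k * Real.cos θ ^ l - c₁ * Real.sin (σ θ) ^ (k+l) := by
    set h : ℝ → ℝ := fun y => Real.sin y ^ k * Real.cos y ^ l - c₁ * Real.sin (σ y) ^ (k+l)
      with hhdef
    have hh0 : h 0 = 0 := by
      simp only [hhdef, hσ0, Real.sin_zero, Real.cos_zero]
      rw [Real.zero_rpow hk.ne', Real.one_rpow, Real.zero_rpow (by positivity : k + l ≠ 0)]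
      ring
    have hhπ : h (π/2) = 0 := by
      simp only [hhdef, hσπ, Real.sin_pi_div_two, Real.cos_pi_div_two, Real.sin_pi]
      rw [Real.zero_rpow hl.ne', Real.one_rpow, Real.zero_rpow (by positivity : k + l ≠ 0)]
      ring
    have hhcont : ContinuousOn h (Icc 0 (π/2)) := by
      exact (hgc.continuousOn).sub (continuousOn_const.mul (hfc.comp_continuousOn hσcont))
    obtain ⟨θ₀, hθ₀I, hminOn⟩ := isCompact_Icc.exists_isMinOn
      (nonempty_Icc.2 (by linarith : (0:ℝ) ≤ π/2)) hhcont
    intro θ hθ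
    by_contra hcon
    push_neg at hcon
    have hmin_neg : h θ₀ < 0 := lt_of_le_of_lt (hminOn hθ) hcon
    have hθ₀Ioo : θ₀ ∈ Ioo 0 (π/2) := by
      rcases eq_or_lt_of_le hθ₀I.1 with h0|h0
      · exfalso; rw [← h0] at hmin_neg; rw [hh0] at hmin_neg; exact lt_irrefl _ hmin_neg
      rcases eq_or_lt_of_le hθ₀I.2 with h1|h1
      · exfalso; rw [h1] at hmin_neg; rw [hhπ] at hmin_neg; exact lt_irrefl _ hmin_neg
      exact ⟨h0, h1⟩
    -- data at θ₀
    have hsθ : 0 < Real.sin θ₀ :=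
      Real.sin_pos_of_pos_of_lt_pi hθ₀Ioo.1 (hθ₀Ioo.2.trans (by linarith))
    have hcθ : 0 < Real.cos θ₀ := Real.cos_pos_of_mem_Ioo ⟨by linarith [hθ₀Ioo.1], hθ₀Ioo.2⟩
    have hsσ := hσIoo θ₀ hθ₀Ioo
    have hS : 0 < Real.sin (σ θ₀) := Real.sin_pos_of_pos_of_lt_pi hsσ.1 hsσ.2
    have hP : 0 < Real.sin θ₀ ^ k * Real.cos θ₀ ^ l := hgpos θ₀ hθ₀Ioo
    have hQpos : 0 < c₁ * Real.sin (σ θ₀) ^ (k+l) :=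
      mul_pos hc₁pos (Real.rpow_pos_of_pos hS _)
    have hPQ : Real.sin θ₀ ^ k * Real.cos θ₀ ^ l < c₁ * Real.sin (σ θ₀) ^ (k+l) := by
      have : h θ₀ = Real.sin θ₀ ^ k * Real.cos θ₀ ^ l - c₁ * Real.sin (σ θ₀) ^ (k+l) := rfl
      linarith [hmin_neg]
    -- local min gives derivative zero
    have hlocmin : IsLocalMin h θ₀ :=
      hminOn.isLocalMin (Icc_mem_nhds hθ₀Ioo.1 hθ₀Ioo.2)
    have hDh := hhD θ₀ hθ₀Ioo
    have hzero := hlocmin.hasDerivAt_eq_zero hDh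
    have hw0 : (k * (Real.cos θ₀ / Real.sin θ₀) - l * (Real.sin θ₀ / Real.cos θ₀))
        - (k+l) * (Real.cos (σ θ₀) / Real.sin (σ θ₀)) = 0 := by
      rcases mul_eq_zero.1 hzero with h'|h'
      · exact absurd h' hP.ne'
      · exact h'
    -- derivative of w at θ₀
    set w : ℝ → ℝ := fun y => (k * (Real.cos y / Real.sin y) - l * (Real.sin y / Real.cos y))
        - (k+l) * (Real.cos (σ y) / Real.sin (σ y)) with hwdef
    have hd1 : HasDerivAt (fun y => Real.cos y / Real.sin y)
        ((-Real.sin θ₀ * Real.sin θ₀ - Real.cos θ₀ * Real.cos θ₀) / Real.sin θ₀ ^ 2) θ₀ :=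
      (Real.hasDerivAt_cos θ₀).div (Real.hasDerivAt_sin θ₀) hsθ.ne'
    have hd2 : HasDerivAt (fun y => Real.sin y / Real.cos y)
        ((Real.cos θ₀ * Real.cos θ₀ - Real.sin θ₀ * -Real.sin θ₀) / Real.cos θ₀ ^ 2) θ₀ :=
      (Real.hasDerivAt_sin θ₀).div (Real.hasDerivAt_cos θ₀) hcθ.ne'
    set σ' : ℝ := (Real.sin θ₀ ^ k * Real.cos θ₀ ^ l) / (c₁ * Real.sin (σ θ₀) ^ (k+l))
      with hσ'def
    have hd3 : HasDerivAt (fun y => Real.cos (σ y) / Real.sin (σ y))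
        ((-Real.sin (σ θ₀) * σ' * Real.sin (σ θ₀)
          - Real.cos (σ θ₀) * (Real.cos (σ θ₀) * σ')) / Real.sin (σ θ₀) ^ 2) θ₀ := by
      have hc : HasDerivAt (fun y => Real.cos (σ y)) (-Real.sin (σ θ₀) * σ') θ₀ :=
        (Real.hasDerivAt_cos (σ θ₀)).comp θ₀ (hσD θ₀ hθ₀Ioo)
      have hsn : HasDerivAt (fun y => Real.sin (σ y)) (Real.cos (σ θ₀) * σ') θ₀ :=
        (Real.hasDerivAt_sin (σ θ₀)).comp θ₀ (hσD θ₀ hθ₀Ioo)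
      exact hc.div hsn hS.ne'
    have hwD : HasDerivAt w
        (k * ((-Real.sin θ₀ * Real.sin θ₀ - Real.cos θ₀ * Real.cos θ₀) / Real.sin θ₀ ^ 2)
          - l * ((Real.cos θ₀ * Real.cos θ₀ - Real.sin θ₀ * -Real.sin θ₀) / Real.cos θ₀ ^ 2)
          - (k+l) * ((-Real.sin (σ θ₀) * σ' * Real.sin (σ θ₀)
            - Real.cos (σ θ₀) * (Real.cos (σ θ₀) * σ')) / Real.sin (σ θ₀) ^ 2)) θ₀ :=
      ((hd1.const_mul k).sub (hd2.const_mul l)).sub (hd3.const_mul (k+l))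
    -- the derivative of w at θ₀ is negative
    have hwneg : (k * ((-Real.sin θ₀ * Real.sin θ₀ - Real.cos θ₀ * Real.cos θ₀) / Real.sin θ₀ ^ 2)
          - l * ((Real.cos θ₀ * Real.cos θ₀ - Real.sin θ₀ * -Real.sin θ₀) / Real.cos θ₀ ^ 2)
          - (k+l) * ((-Real.sin (σ θ₀) * σ' * Real.sin (σ θ₀)
            - Real.cos (σ θ₀) * (Real.cos (σ θ₀) * σ')) / Real.sin (σ θ₀) ^ 2)) < 0 := by
      have hpyth1 : Real.sin θ₀ ^ 2 + Real.cos θ₀ ^ 2 = 1 := Real.sin_sq_add_cos_sq θ₀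
      have hpyth2 : Real.sin (σ θ₀) ^ 2 + Real.cos (σ θ₀) ^ 2 = 1 := Real.sin_sq_add_cos_sq (σ θ₀)
      have hkey := stmt5_key_alg k l (Real.sin θ₀) (Real.cos θ₀) (Real.sin (σ θ₀))
        (Real.cos (σ θ₀)) (Real.sin θ₀ ^ k * Real.cos θ₀ ^ l) (c₁ * Real.sin (σ θ₀) ^ (k+l))
        hk hl hsθ hcθ hS hpyth1 hpyth2 hP hPQ (by
          rw [mul_div_assoc, mul_div_assoc, mul_div_assoc]
          linarith [hw0])
      have heq : (k * ((-Real.sin θ₀ * Real.sin θ₀ - Real.cos θ₀ * Real.cos θ₀) / Real.sin θ₀ ^ 2)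
          - l * ((Real.cos θ₀ * Real.cos θ₀ - Real.sin θ₀ * -Real.sin θ₀) / Real.cos θ₀ ^ 2)
          - (k+l) * ((-Real.sin (σ θ₀) * σ' * Real.sin (σ θ₀)
            - Real.cos (σ θ₀) * (Real.cos (σ θ₀) * σ')) / Real.sin (σ θ₀) ^ 2))
          = -(k/Real.sin θ₀^2) - l/Real.cos θ₀^2 + (k+l)/Real.sin (σ θ₀)^2 *
            ((Real.sin θ₀ ^ k * Real.cos θ₀ ^ l) / (c₁ * Real.sin (σ θ₀) ^ (k+l))) := by
        have e1 : -Real.sin θ₀ * Real.sin θ₀ - Real.cos θ₀ * Real.cos θ₀ = -1 := by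
          linear_combination -hpyth1
        have e2 : Real.cos θ₀ * Real.cos θ₀ - Real.sin θ₀ * -Real.sin θ₀ = 1 := by
          linear_combination hpyth1
        have e3 : -Real.sin (σ θ₀) * σ' * Real.sin (σ θ₀)
            - Real.cos (σ θ₀) * (Real.cos (σ θ₀) * σ') = -σ' := by
          linear_combination (-σ') * hpyth2
        rw [e1, e2, e3, ← hσ'def]
        have hs2 : Real.sin θ₀ ^ 2 ≠ 0 := by positivity
        have hc2 : Real.cos θ₀ ^ 2 ≠ 0 := by positivity
        have hS2 : Real.sin (σ θ₀) ^ 2 ≠ 0 := by positivity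
        field_simp
        ring
      rw [heq]
      exact hkey
    -- contradiction: h is strictly increasing just left of θ₀
    have hslope : ∀ᶠ y in 𝓝[<] θ₀, 0 < w y := by
      have ht := hasDerivAt_iff_tendsto_slope.1 hwD
      have hlt := ht.eventually_lt_const hwneg
      have h1 : ∀ᶠ y in 𝓝[<] θ₀, slope w θ₀ y < 0 :=
        hlt.filter_mono (nhdsWithin_mono θ₀ (fun y hy => ne_of_lt hy))
      filter_upwards [h1, self_mem_nhdsWithin] with y hy1 hy2
      rw [slope_def_field] at hy1
      have hyθ : y - θ₀ < 0 := sub_neg.2 hy2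
      have hnum : 0 < w y - w θ₀ := by
        rcases div_neg_iff.1 hy1 with ⟨ha, hb⟩|⟨ha, hb⟩
        · linarith
        · linarith
      have hw0' : w θ₀ = 0 := hw0
      linarith
    have hevIoo : ∀ᶠ y in 𝓝[<] θ₀, y ∈ Ioo 0 (π/2) :=
      (eventually_of_mem (Ioo_mem_nhds hθ₀Ioo.1 hθ₀Ioo.2) (fun _ hh => hh)).filter_mono
        nhdsWithin_le_nhds
    obtain ⟨c, hc, hsub⟩ := mem_nhdsLT_iff_exists_Ioo_subset.1 (hslope.and hevIoo)
    set c' : ℝ := (c + θ₀)/2 with hc'def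
    have hcθ₀ : c < θ₀ := hc
    have hc'mem : c' ∈ Ioo c θ₀ := ⟨by simp only [hc'def]; linarith, by simp only [hc'def]; linarith⟩
    have hc'Ioo : c' ∈ Ioo 0 (π/2) := (hsub hc'mem).2
    have hIccsub : Icc c' θ₀ ⊆ Icc 0 (π/2) := fun x hx =>
      ⟨le_trans hc'Ioo.1.le hx.1, le_trans hx.2 hθ₀Ioo.2.le⟩
    have hmono : StrictMonoOn h (Icc c' θ₀) := by
      apply strictMonoOn_of_deriv_pos (convex_Icc _ _) (hhcont.mono hIccsub)
      intro x hx
      rw [interior_Icc] at hx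
      have hxc : x ∈ Ioo c θ₀ := ⟨lt_trans hc'mem.1 hx.1, hx.2⟩
      have hxprop := hsub hxc
      rw [(hhD x hxprop.2).deriv]
      exact mul_pos (hgpos x hxprop.2) hxprop.1
    have hlt2 : h c' < h θ₀ := hmono (left_mem_Icc.2 hc'mem.2.le)
      (right_mem_Icc.2 hc'mem.2.le) hc'mem.2
    have hge : h θ₀ ≤ h c' := hminOn (hIccsub (left_mem_Icc.2 hc'mem.2.le))
    linarith
  -- conclude
  intro θ hθ
  have hθI : θ ∈ Icc 0 (π/2) := Ioo_subset_Icc_self hθ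
  have hineq := hmain θ hθI
  have hs := hσIoo θ hθ
  have hS : 0 < Real.sin (σ θ) := Real.sin_pos_of_pos_of_lt_pi hs.1 hs.2
  have hQpos : 0 < c₁ * Real.sin (σ θ) ^ (k+l) := mul_pos hc₁pos (Real.rpow_pos_of_pos hS _)
  constructor
  · rw [(hσD θ hθ).deriv]
    rw [le_div_iff₀ hQpos, one_mul]
    linarith
  · linarith
end

section
/- For k, l > 0, define σ : [0, π/2] → [0, π] by the implicit equation ∫₀^θ sinᵏ t cosˡ t dt = c₁ ∫₀^{σ(θ)} sin^{k+l} s ds. Then the map T(r cos θ, r sin θ) := (r cos σ(θ), r sin σ(θ)) pushes the measure c₁ · e^{c(u²+v²)} v^{k+l} du dv on the upper half-plane back to the measure e^{c(x²+y²)} xˡ yᵏ dx dy on the open first quadrant; that is, for every measurable M ⊆ {x>0, y>0}, ∫_M e^{c(x²+y²)} xˡ yᵏ dx dy = c₁ ∫_{T(M)} e^{c(u²+v²)} v^{k+l} du dv. -/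
set_option maxHeartbeats 1000000
open Real Set MeasureTheory

theorem stmt_7 (c k l : ℝ) (hc : 0 ≤ c) (hk : 0 < k) (hl : 0 < l)
    (c₁ : ℝ)
    (hc₁ : c₁ = (∫ t in (0:ℝ)..(π / 2), Real.sin t ^ k * Real.cos t ^ l) /
        (∫ s in (0:ℝ)..π, Real.sin s ^ (k + l)))
    (σ : ℝ → ℝ)
    (hσmem : ∀ θ ∈ Icc 0 (π / 2), σ θ ∈ Icc 0 π)
    (hσeq : ∀ θ ∈ Icc 0 (π / 2),
      (∫ t in (0:ℝ)..θ, Real.sin t ^ k * Real.cos t ^ l) =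
        c₁ * ∫ s in (0:ℝ)..(σ θ), Real.sin s ^ (k + l))
    (T : ℝ × ℝ → ℝ × ℝ)
    (hT : ∀ r θ : ℝ, 0 < r → θ ∈ Ioo 0 (π / 2) →
      T (r * Real.cos θ, r * Real.sin θ) = (r * Real.cos (σ θ), r * Real.sin (σ θ)))
    (M : Set (ℝ × ℝ)) (hM : MeasurableSet M)
    (hMW : M ⊆ {p : ℝ × ℝ | 0 < p.1 ∧ 0 < p.2}) :
    (∫ p in M, Real.exp (c * (p.1 ^ 2 + p.2 ^ 2)) * p.1 ^ l * p.2 ^ k) =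
      c₁ * ∫ p in T '' M, Real.exp (c * (p.1 ^ 2 + p.2 ^ 2)) * p.2 ^ (k + l) := by
  have hπ : (0:ℝ) < π / 2 := by positivity
  set F : ℝ → ℝ := fun θ => ∫ t in (0:ℝ)..θ, Real.sin t ^ k * Real.cos t ^ l with hFdef
  set G : ℝ → ℝ := fun u => ∫ s in (0:ℝ)..u, Real.sin s ^ (k + l) with hGdef
  have hσeqF : ∀ θ ∈ Icc 0 (π / 2), F θ = c₁ * G (σ θ) := hσeq
  have hc₁' : c₁ = F (π / 2) / G π := hc₁
  -- continuity of integrands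
  have contF' : Continuous fun t => Real.sin t ^ k * Real.cos t ^ l :=
    ((Real.continuous_rpow_const hk.le).comp Real.continuous_sin).mul
      ((Real.continuous_rpow_const hl.le).comp Real.continuous_cos)
  have contG' : Continuous fun s => Real.sin s ^ (k + l) :=
    (Real.continuous_rpow_const (by positivity)).comp Real.continuous_sin
  -- FTC
  have hFderiv : ∀ x : ℝ, HasStrictDerivAt F (Real.sin x ^ k * Real.cos x ^ l) x := fun x =>
    intervalIntegral.integral_hasStrictDerivAt_right (contF'.intervalIntegrable _ _)
      (contF'.stronglyMeasurableAtFilter _ _) contF'.continuousAt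
  have hGderiv : ∀ x : ℝ, HasStrictDerivAt G (Real.sin x ^ (k + l)) x := fun x =>
    intervalIntegral.integral_hasStrictDerivAt_right (contG'.intervalIntegrable _ _)
      (contG'.stronglyMeasurableAtFilter _ _) contG'.continuousAt
  -- strict monotonicity
  have hGmono : StrictMonoOn G (Icc 0 π) := by
    intro x hx y hy hxy
    have key : G x + ∫ s in x..y, Real.sin s ^ (k + l) = G y :=
      intervalIntegral.integral_add_adjacent_intervals
        (contG'.intervalIntegrable _ _) (contG'.intervalIntegrable _ _)
    have hpos : 0 < ∫ s in x..y, Real.sin s ^ (k + l) := by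
      apply intervalIntegral.intervalIntegral_pos_of_pos_on (contG'.intervalIntegrable _ _) _ hxy
      intro t ht
      have : 0 < Real.sin t :=
        Real.sin_pos_of_pos_of_lt_pi (lt_of_le_of_lt hx.1 ht.1) (lt_of_lt_of_le ht.2 hy.2)
      exact Real.rpow_pos_of_pos this _
    linarith
  have hFmono : StrictMonoOn F (Icc 0 (π / 2)) := by
    intro x hx y hy hxy
    have key : F x + ∫ t in x..y, Real.sin t ^ k * Real.cos t ^ l = F y :=
      intervalIntegral.integral_add_adjacent_intervals
        (contF'.intervalIntegrable _ _) (contF'.intervalIntegrable _ _)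
    have hpos : 0 < ∫ t in x..y, Real.sin t ^ k * Real.cos t ^ l := by
      apply intervalIntegral.intervalIntegral_pos_of_pos_on (contF'.intervalIntegrable _ _) _ hxy
      intro t ht
      have h1 : 0 < Real.sin t := Real.sin_pos_of_pos_of_lt_pi (lt_of_le_of_lt hx.1 ht.1)
        (by linarith [lt_of_lt_of_le ht.2 hy.2, Real.pi_pos])
      have h2 : 0 < Real.cos t := Real.cos_pos_of_mem_Ioo
        ⟨by linarith [lt_of_le_of_lt hx.1 ht.1, Real.pi_pos], lt_of_lt_of_le ht.2 hy.2⟩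
      exact mul_pos (Real.rpow_pos_of_pos h1 _) (Real.rpow_pos_of_pos h2 _)
    linarith
  have hF0 : F 0 = 0 := intervalIntegral.integral_same
  have hG0 : G 0 = 0 := intervalIntegral.integral_same
  have hFhalf : 0 < F (π / 2) := by
    have := hFmono (left_mem_Icc.2 hπ.le) (right_mem_Icc.2 hπ.le) hπ
    rwa [hF0] at this
  have hGpi : 0 < G π := by
    have := hGmono (left_mem_Icc.2 Real.pi_pos.le) (right_mem_Icc.2 Real.pi_pos.le) Real.pi_pos
    rwa [hG0] at this
  have hc₁pos : 0 < c₁ := hc₁' ▸ div_pos hFhalf hGpi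
  have hFc : F (π / 2) = c₁ * G π := by rw [hc₁']; field_simp
  -- values of σ in the open interval
  have hσIoo : ∀ θ ∈ Ioo 0 (π / 2), σ θ ∈ Ioo 0 π := by
    intro θ hθ
    have hθ' : θ ∈ Icc 0 (π / 2) := Ioo_subset_Icc_self hθ
    have hmem := hσmem θ hθ'
    have heq := hσeqF θ hθ'
    have h1 : 0 < F θ := by
      have := hFmono (left_mem_Icc.2 hπ.le) hθ' hθ.1; rwa [hF0] at this
    have h2 : F θ < F (π / 2) := hFmono hθ' (right_mem_Icc.2 hπ.le) hθ.2
    constructor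
    · rcases hmem.1.lt_or_eq with h | h
      · exact h
      · exfalso; rw [← h, hG0, mul_zero] at heq; linarith
    · rcases hmem.2.lt_or_eq with h | h
      · exact h
      · exfalso; rw [h] at heq; rw [heq, ← hFc] at h2; exact lt_irrefl _ h2
  have hσinj : InjOn σ (Ioo 0 (π / 2)) := by
    intro x hx y hy hxy
    have : F x = F y := by
      rw [hσeqF x (Ioo_subset_Icc_self hx), hσeqF y (Ioo_subset_Icc_self hy), hxy]
    exact hFmono.injOn (Ioo_subset_Icc_self hx) (Ioo_subset_Icc_self hy) this
  -- derivative of σ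
  set dσ : ℝ → ℝ := fun θ =>
    Real.sin θ ^ k * Real.cos θ ^ l / (c₁ * Real.sin (σ θ) ^ (k + l)) with hdσdef
  have hσDeriv : ∀ θ₀ ∈ Ioo 0 (π / 2), HasDerivAt σ (dσ θ₀) θ₀ := by
    intro θ₀ hθ₀
    have hs₀ : σ θ₀ ∈ Ioo 0 π := hσIoo θ₀ hθ₀
    have hsin : 0 < Real.sin (σ θ₀) := Real.sin_pos_of_pos_of_lt_pi hs₀.1 hs₀.2
    have hG'pos : 0 < Real.sin (σ θ₀) ^ (k + l) := Real.rpow_pos_of_pos hsin _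
    have hGs : HasStrictDerivAt G (Real.sin (σ θ₀) ^ (k + l)) (σ θ₀) := hGderiv (σ θ₀)
    have hne : Real.sin (σ θ₀) ^ (k + l) ≠ 0 := hG'pos.ne'
    have hfd := hGs.hasStrictFDerivAt_equiv hne
    set g : ℝ → ℝ := hGs.localInverse G _ (σ θ₀) hne with hgdef
    have hval : F θ₀ / c₁ = G (σ θ₀) := by
      rw [hσeqF θ₀ (Ioo_subset_Icc_self hθ₀)]; field_simp
    have htendsto : Filter.Tendsto (fun θ => F θ / c₁) (nhds θ₀) (nhds (G (σ θ₀))) := by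
      rw [← hval]; exact ((hFderiv θ₀).hasDerivAt.continuousAt.div_const _)
    have h1 : ∀ᶠ θ in nhds θ₀, G (g (F θ / c₁)) = F θ / c₁ :=
      htendsto.eventually hfd.eventually_right_inverse
    have hgval : g (G (σ θ₀)) = σ θ₀ := hfd.localInverse_apply_image
    have h2 : ∀ᶠ θ in nhds θ₀, g (F θ / c₁) ∈ Ioo 0 π := by
      have hcg : ContinuousAt g (G (σ θ₀)) := hfd.localInverse_continuousAt
      have h2' : ∀ᶠ y in nhds (G (σ θ₀)), g y ∈ Ioo 0 π :=
        hcg.eventually_mem (by rw [hgval]; exact Ioo_mem_nhds hs₀.1 hs₀.2)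
      exact htendsto.eventually h2'
    have h3 : ∀ᶠ θ in nhds θ₀, θ ∈ Icc 0 (π / 2) := by
      filter_upwards [Ioo_mem_nhds hθ₀.1 hθ₀.2] with θ hθ using Ioo_subset_Icc_self hθ
    have heqev : σ =ᶠ[nhds θ₀] fun θ => g (F θ / c₁) := by
      filter_upwards [h1, h2, h3] with θ e1 e2 e3
      refine hGmono.injOn (hσmem θ e3) (Ioo_subset_Icc_self e2) ?_
      rw [e1, hσeqF θ e3]; field_simp
    have hg' : HasDerivAt g (Real.sin (σ θ₀) ^ (k + l))⁻¹ (F θ₀ / c₁) := by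
      rw [hval]; exact (hGs.to_localInverse hne).hasDerivAt
    have hFd : HasDerivAt (fun θ => F θ / c₁)
        ((Real.sin θ₀ ^ k * Real.cos θ₀ ^ l) / c₁) θ₀ := (hFderiv θ₀).hasDerivAt.div_const _
    have hcomp : HasDerivAt (fun θ => g (F θ / c₁))
        ((Real.sin (σ θ₀) ^ (k + l))⁻¹ * ((Real.sin θ₀ ^ k * Real.cos θ₀ ^ l) / c₁)) θ₀ :=
      HasDerivAt.comp θ₀ hg' hFd
    have hres : HasDerivAt σ
        ((Real.sin (σ θ₀) ^ (k + l))⁻¹ * ((Real.sin θ₀ ^ k * Real.cos θ₀ ^ l) / c₁)) θ₀ :=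
      hcomp.congr_of_eventuallyEq heqev
    convert hres using 1
    have hcne : c₁ ≠ 0 := hc₁pos.ne'
    simp only [hdσdef]
    rw [eq_comm, inv_mul_eq_div, div_div]
  -- geometric part
  set f : ℝ × ℝ → ℝ := fun p => Real.exp (c * (p.1 ^ 2 + p.2 ^ 2)) * p.1 ^ l * p.2 ^ k with hfdef
  set g2 : ℝ × ℝ → ℝ := fun p => Real.exp (c * (p.1 ^ 2 + p.2 ^ 2)) * p.2 ^ (k + l) with hg2def
  set S : Set (ℝ × ℝ) := polarCoord.target ∩
    (fun q : ℝ × ℝ => (q.1 * Real.cos q.2, q.1 * Real.sin q.2)) ⁻¹' M with hSdef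
  have hΨcont : Continuous fun q : ℝ × ℝ => (q.1 * Real.cos q.2, q.1 * Real.sin q.2) :=
    (continuous_fst.mul (Real.continuous_cos.comp continuous_snd)).prodMk
      (continuous_fst.mul (Real.continuous_sin.comp continuous_snd))
  have hSmeas : MeasurableSet S :=
    polarCoord.open_target.measurableSet.inter (hM.preimage hΨcont.measurable)
  have hSsub : ∀ q ∈ S, 0 < q.1 ∧ q.2 ∈ Ioo 0 (π / 2) := by
    rintro ⟨r, θ⟩ ⟨hq1, hq2⟩
    rw [polarCoord_target] at hq1
    obtain ⟨hr, hθ⟩ := hq1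
    obtain ⟨hx, hy⟩ := hMW hq2
    simp only [mem_setOf_eq] at hx hy
    simp only [mem_Ioi] at hr
    simp only [mem_Ioo] at hθ
    have hcos : 0 < Real.cos θ := by
      rcases mul_pos_iff.1 hx with ⟨_, h⟩ | ⟨h, _⟩
      · exact h
      · linarith
    have hsin : 0 < Real.sin θ := by
      rcases mul_pos_iff.1 hy with ⟨_, h⟩ | ⟨h, _⟩
      · exact h
      · linarith
    refine ⟨hr, ?_, ?_⟩
    · by_contra h
      push_neg at h
      exact absurd hsin (not_lt.2 (Real.sin_nonpos_of_nonpos_of_neg_pi_le h hθ.1.le))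
    · by_contra h
      push_neg at h
      exact absurd hcos (not_lt.2 (Real.cos_nonpos_of_pi_div_two_le_of_le h
        (by linarith [hθ.2, Real.pi_pos])))
  have hMim : polarCoord.symm '' S = M := by
    apply Subset.antisymm
    · rintro p ⟨q, hq, rfl⟩
      exact hq.2
    · intro p hp
      have hps : p ∈ polarCoord.source := by
        rw [polarCoord_source]; exact Or.inl (hMW hp).1
      refine ⟨polarCoord p, ⟨polarCoord.map_source hps, ?_⟩, polarCoord.left_inv hps⟩
      show polarCoord.symm (polarCoord p) ∈ M
      rw [polarCoord.left_inv hps]; exact hp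
  set W : ℝ × ℝ → ℝ × ℝ :=
    fun q => (q.1 * Real.cos (σ q.2), q.1 * Real.sin (σ q.2)) with hWdef
  have hTim : T '' M = W '' S := by
    rw [← hMim, ← image_comp]
    refine image_congr ?_
    intro q hq
    obtain ⟨hr, hθ⟩ := hSsub q hq
    show T (polarCoord.symm q) = W q
    have hrw : polarCoord.symm q = (q.1 * Real.cos q.2, q.1 * Real.sin q.2) := rfl
    rw [hrw, hWdef]
    exact hT q.1 q.2 hr hθ
  set B : ℝ × ℝ → (ℝ × ℝ) →L[ℝ] (ℝ × ℝ) := fun q =>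
    LinearMap.toContinuousLinearMap (Matrix.toLin (Module.Basis.finTwoProd ℝ) (Module.Basis.finTwoProd ℝ)
      !![Real.cos q.2, -q.1 * Real.sin q.2; Real.sin q.2, q.1 * Real.cos q.2]) with hBdef
  have hBdet : ∀ q : ℝ × ℝ, (B q).det = q.1 := by
    intro q
    simp only [hBdef, LinearMap.det_toContinuousLinearMap, LinearMap.det_toLin,
      Matrix.det_fin_two_of]
    linear_combination q.1 * (Real.sin_sq_add_cos_sq q.2)
  set BW : ℝ × ℝ → (ℝ × ℝ) →L[ℝ] (ℝ × ℝ) := fun q =>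
    LinearMap.toContinuousLinearMap (Matrix.toLin (Module.Basis.finTwoProd ℝ) (Module.Basis.finTwoProd ℝ)
      !![Real.cos (σ q.2), -q.1 * Real.sin (σ q.2) * dσ q.2;
         Real.sin (σ q.2), q.1 * Real.cos (σ q.2) * dσ q.2]) with hBWdef
  have hBWdet : ∀ q : ℝ × ℝ, (BW q).det = q.1 * dσ q.2 := by
    intro q
    simp only [hBWdef, LinearMap.det_toContinuousLinearMap, LinearMap.det_toLin,
      Matrix.det_fin_two_of]
    linear_combination (q.1 * dσ q.2) * (Real.sin_sq_add_cos_sq (σ q.2))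
  have hBWderiv : ∀ q ∈ S, HasFDerivWithinAt W (BW q) S q := by
    intro q hq
    obtain ⟨hr, hθ⟩ := hSsub q hq
    have hσd := hσDeriv q.2 hθ
    have hcosd : HasDerivAt (fun x => Real.cos (σ x)) (-Real.sin (σ q.2) * dσ q.2) q.2 :=
      (Real.hasDerivAt_cos (σ q.2)).comp q.2 hσd
    have hsind : HasDerivAt (fun x => Real.sin (σ x)) (Real.cos (σ q.2) * dσ q.2) q.2 :=
      (Real.hasDerivAt_sin (σ q.2)).comp q.2 hσd
    apply HasFDerivAt.hasFDerivWithinAt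
    simp only [hBWdef]
    rw [Matrix.toLin_finTwoProd_toContinuousLinearMap]
    convert! HasFDerivAt.prodMk (𝕜 := ℝ)
      (hasFDerivAt_fst.mul (hcosd.comp_hasFDerivAt q hasFDerivAt_snd))
      (hasFDerivAt_fst.mul (hsind.comp_hasFDerivAt q hasFDerivAt_snd)) using 2 <;>
    · simp [smul_smul, add_comm, neg_mul, smul_neg, neg_smul _ (ContinuousLinearMap.snd ℝ ℝ ℝ)]
      module
  have hWinj : InjOn W S := by
    intro q hq q' hq' he
    obtain ⟨hr, hθ⟩ := hSsub q hq
    obtain ⟨hr', hθ'⟩ := hSsub q' hq'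
    have h1 := congrArg Prod.fst he
    have h2 := congrArg Prod.snd he
    simp only [hWdef] at h1 h2
    have a1 := Real.sin_sq_add_cos_sq (σ q.2)
    have b1 := Real.sin_sq_add_cos_sq (σ q'.2)
    have hnorm : q.1 ^ 2 = q'.1 ^ 2 := by
      linear_combination (q.1 * Real.cos (σ q.2) + q'.1 * Real.cos (σ q'.2)) * h1 +
        (q.1 * Real.sin (σ q.2) + q'.1 * Real.sin (σ q'.2)) * h2 - q.1 ^ 2 * a1 + q'.1 ^ 2 * b1
    have e1 : q.1 = q'.1 := by nlinarith [hnorm, hr, hr']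
    have e2 : Real.cos (σ q.2) = Real.cos (σ q'.2) := by
      rw [e1] at h1; exact mul_left_cancel₀ hr'.ne' h1
    have e3 : σ q.2 = σ q'.2 :=
      Real.injOn_cos (hσmem q.2 (Ioo_subset_Icc_self hθ)) (hσmem q'.2 (Ioo_subset_Icc_self hθ'))
        e2
    have e4 : q.2 = q'.2 := hσinj hθ hθ' e3
    exact Prod.ext e1 e4
  have key : ∀ q ∈ S, |(B q).det| • f (polarCoord.symm q)
      = c₁ * (|(BW q).det| • g2 (W q)) := by
    intro q hq
    obtain ⟨hr, hθ⟩ := hSsub q hq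
    have hs : σ q.2 ∈ Ioo 0 π := hσIoo q.2 hθ
    have hsinσ : 0 < Real.sin (σ q.2) := Real.sin_pos_of_pos_of_lt_pi hs.1 hs.2
    have hsinθ : 0 < Real.sin q.2 :=
      Real.sin_pos_of_pos_of_lt_pi hθ.1 (by linarith [Real.pi_pos, hθ.2])
    have hcosθ : 0 < Real.cos q.2 :=
      Real.cos_pos_of_mem_Ioo ⟨by linarith [hθ.1, Real.pi_pos], hθ.2⟩
    have hd : 0 < dσ q.2 := by
      simp only [hdσdef]
      exact div_pos (mul_pos (Real.rpow_pos_of_pos hsinθ _) (Real.rpow_pos_of_pos hcosθ _))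
        (mul_pos hc₁pos (Real.rpow_pos_of_pos hsinσ _))
    have hdd : c₁ * dσ q.2 * Real.sin (σ q.2) ^ (k + l)
        = Real.sin q.2 ^ k * Real.cos q.2 ^ l := by
      have hc₁ne : c₁ ≠ 0 := hc₁pos.ne'
      have hSne : Real.sin (σ q.2) ^ (k + l) ≠ 0 := (Real.rpow_pos_of_pos hsinσ _).ne'
      simp only [hdσdef]
      field_simp
    rw [hBdet, hBWdet, abs_of_pos hr, abs_of_pos (mul_pos hr hd)]
    have hrw : polarCoord.symm q = (q.1 * Real.cos q.2, q.1 * Real.sin q.2) := rfl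
    rw [hrw]
    simp only [hfdef, hg2def, hWdef, smul_eq_mul]
    have e1 : (q.1 * Real.cos q.2) ^ 2 + (q.1 * Real.sin q.2) ^ 2 = q.1 ^ 2 := by
      linear_combination q.1 ^ 2 * (Real.sin_sq_add_cos_sq q.2)
    have e2 : (q.1 * Real.cos (σ q.2)) ^ 2 + (q.1 * Real.sin (σ q.2)) ^ 2 = q.1 ^ 2 := by
      linear_combination q.1 ^ 2 * (Real.sin_sq_add_cos_sq (σ q.2))
    rw [e1, e2, Real.mul_rpow hr.le hcosθ.le, Real.mul_rpow hr.le hsinθ.le,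
      Real.mul_rpow hr.le hsinσ.le, Real.rpow_add hr]
    have hc₁ne : c₁ ≠ 0 := hc₁pos.ne'
    have hSne : Real.sin (σ q.2) ^ (k + l) ≠ 0 := (Real.rpow_pos_of_pos hsinσ _).ne'
    simp only [hdσdef]
    field_simp
  calc (∫ p in M, f p)
      = ∫ p in polarCoord.symm '' S, f p := by rw [hMim]
    _ = ∫ q in S, |(B q).det| • f (polarCoord.symm q) :=
        integral_image_eq_integral_abs_det_fderiv_smul volume hSmeas
          (fun q _ => (hasFDerivAt_polarCoord_symm q).hasFDerivWithinAt)
          (polarCoord.symm.injOn.mono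
            (by rw [OpenPartialHomeomorph.symm_source]; exact inter_subset_left)) f
    _ = ∫ q in S, c₁ * (|(BW q).det| • g2 (W q)) := setIntegral_congr_fun hSmeas key
    _ = c₁ * ∫ q in S, |(BW q).det| • g2 (W q) := by rw [MeasureTheory.integral_const_mul]
    _ = c₁ * ∫ p in W '' S, g2 p := by
        rw [integral_image_eq_integral_abs_det_fderiv_smul volume hSmeas hBWderiv hWinj]
    _ = c₁ * ∫ p in T '' M, g2 p := by rw [hTim]
end
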